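/- Assume additionally that there exist constants D, γ_D > 0 such that V(t) ≥ γ_D·t^{D/2} for every t > 0. Let 1 ≤ p < ∞. Then there exists a constant C₁ > 0 (depending only on N, D, γ_D, p) such that for every f ∈ L^p(ℝᴺ), every X ∈ ℝᴺ, and every z > 0 one has |𝒫_z f(X)| ≤ C₁·z^{−D/p}·‖f‖_{L^p} (ultracontractivity of the Poisson semigroup). -/

import Mathlib

open MeasureTheory Matrix Real
open scoped ENNReal Topology

noncomputable section

/-- The covariance matrix `K(t) = (1/t) ∫₀ᵗ e^{sB} Q e^{sBᵀ} ds`. -/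
def hK {N : ℕ} (Q B : Matrix (Fin N) (Fin N) ℝ) (t : ℝ) : Matrix (Fin N) (Fin N) ℝ :=
  Matrix.of fun i j =>
    (1 / t) * ∫ s in (0:ℝ)..t, (NormedSpace.exp (s • B) * Q * NormedSpace.exp (s • Bᵀ)) i j

/-- The intertwined pseudo-distance `m_t(X,Y) = ⟨K(t)⁻¹(Y - e^{tB}X), Y - e^{tB}X⟩^{1/2}`. -/
def hm {N : ℕ} (Q B : Matrix (Fin N) (Fin N) ℝ) (t : ℝ) (X Y : Fin N → ℝ) : ℝ :=
  Real.sqrt (dotProduct ((hK Q B t)⁻¹.mulVec (Y - (NormedSpace.exp (t • B)).mulVec X))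
    (Y - (NormedSpace.exp (t • B)).mulVec X))

/-- The volume of the unit ball in `ℝᴺ`. -/
def omegaN (N : ℕ) : ℝ := (volume (Metric.ball (0 : EuclideanSpace ℝ (Fin N)) 1)).toReal

/-- The volume function `V(t) = ω_N (det (t K(t)))^{1/2}`. -/
def hV {N : ℕ} (Q B : Matrix (Fin N) (Fin N) ℝ) (t : ℝ) : ℝ :=
  omegaN N * Real.sqrt ((t • hK Q B t).det)

/-- Hörmander's kernel `p(X,Y,t) = (4π)^{-N/2} ω_N V(t)⁻¹ exp(-m_t(X,Y)²/(4t))`. -/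
def hkernel {N : ℕ} (Q B : Matrix (Fin N) (Fin N) ℝ) (X Y : Fin N → ℝ) (t : ℝ) : ℝ :=
  ((4 * π) ^ (-(N : ℝ) / 2) * omegaN N / hV Q B t) * Real.exp (-(hm Q B t X Y) ^ 2 / (4 * t))

/-- The Hörmander semigroup `P_t f(X) = ∫ p(X,Y,t) f(Y) dY`. -/
def hP {N : ℕ} (Q B : Matrix (Fin N) (Fin N) ℝ) (t : ℝ) (f : (Fin N → ℝ) → ℝ)
    (X : Fin N → ℝ) : ℝ :=
  ∫ Y, hkernel Q B X Y t * f Y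

/-- The Riesz potential `ℐ_α f(X) = Γ(α/2)⁻¹ ∫₀^∞ t^{α/2-1} P_t f(X) dt`. -/
def riesz {N : ℕ} (Q B : Matrix (Fin N) (Fin N) ℝ) (α : ℝ) (f : (Fin N → ℝ) → ℝ)
    (X : Fin N → ℝ) : ℝ :=
  (1 / Real.Gamma (α / 2)) * ∫ t in Set.Ioi (0:ℝ), t ^ (α / 2 - 1) * hP Q B t f X

/-- The Poisson semigroup `𝒫_z f(X) = (4π)^{-1/2} ∫₀^∞ z t^{-3/2} e^{-z²/(4t)} P_t f(X) dt`. -/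
def poisson {N : ℕ} (Q B : Matrix (Fin N) (Fin N) ℝ) (z : ℝ) (f : (Fin N → ℝ) → ℝ)
    (X : Fin N → ℝ) : ℝ :=
  (4 * π) ^ (-(1:ℝ) / 2) *
    ∫ t in Set.Ioi (0:ℝ), z * t ^ (-(3:ℝ) / 2) * Real.exp (-(z ^ 2) / (4 * t)) * hP Q B t f X

/-- The Poisson radial maximal function `ℳ* f(X) = sup_{z>0} |𝒫_z f(X)|`. -/
def maxP {N : ℕ} (Q B : Matrix (Fin N) (Fin N) ℝ) (f : (Fin N → ℝ) → ℝ)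
    (X : Fin N → ℝ) : ℝ :=
  ⨆ z : {z : ℝ // 0 < z}, |poisson Q B z.1 f X|

/-- The fractional power `(-𝒜)^s f(X) = -(s/Γ(1-s)) ∫₀^∞ t^{-(1+s)} (P_t f(X) - f(X)) dt`. -/
def fracA {N : ℕ} (Q B : Matrix (Fin N) (Fin N) ℝ) (s : ℝ) (f : (Fin N → ℝ) → ℝ)
    (X : Fin N → ℝ) : ℝ :=
  -(s / Real.Gamma (1 - s)) * ∫ t in Set.Ioi (0:ℝ), t ^ (-(1 + s)) * (hP Q B t f X - f X)

/-- The degenerate Ornstein-Uhlenbeck operator `𝒜 f = tr(Q ∇²f) + ⟨BX, ∇f⟩`. -/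
def opA {N : ℕ} (Q B : Matrix (Fin N) (Fin N) ℝ) (f : (Fin N → ℝ) → ℝ)
    (X : Fin N → ℝ) : ℝ :=
  (∑ i, ∑ j, Q i j * fderiv ℝ (fun Y => fderiv ℝ f Y (Pi.single j 1)) X (Pi.single i 1)) +
    ∑ i, B.mulVec X i * fderiv ℝ f X (Pi.single i 1)

section AuxiliaryLemmas
open Set

lemma aux_sqrt_pow {a : ℝ} (ha : 0 ≤ a) (n : ℕ) : Real.sqrt a ^ n = Real.sqrt (a ^ n) := by
  induction n with
  | zero => simp
  | succ m ih => rw [pow_succ, pow_succ, ih, ← Real.sqrt_mul (pow_nonneg ha m)]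

lemma aux_quad_eq {N : ℕ} (S : Matrix (Fin N) (Fin N) ℝ) (Y : Fin N → ℝ) :
    ((Sᵀ * S).mulVec Y) ⬝ᵥ Y = (S.mulVec Y) ⬝ᵥ (S.mulVec Y) := by
  rw [← Matrix.mulVec_mulVec, Matrix.mulVec_transpose, ← Matrix.dotProduct_mulVec]

lemma aux_cont_quad {N : ℕ} (M : Matrix (Fin N) (Fin N) ℝ) (w : Fin N → ℝ) :
    Continuous fun Y : Fin N → ℝ => (M.mulVec (Y - w)) ⬝ᵥ (Y - w) := by
  simp only [dotProduct, Matrix.mulVec, Pi.sub_apply]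
  fun_prop

lemma gaussian_pi_rw {N : ℕ} (c : ℝ) (u : Fin N → ℝ) :
    Real.exp (-(c * (u ⬝ᵥ u))) = ∏ i, Real.exp (-c * (u i) ^ 2) := by
  rw [← Real.exp_sum]
  congr 1
  simp only [dotProduct, Finset.mul_sum, ← Finset.sum_neg_distrib]
  exact Finset.sum_congr rfl fun i _ => by ring

lemma gaussian_pi_integrable {N : ℕ} {c : ℝ} (hc : 0 < c) :
    Integrable (fun u : Fin N → ℝ => Real.exp (-(c * (u ⬝ᵥ u)))) volume := by
  have : (fun u : Fin N → ℝ => Real.exp (-(c * (u ⬝ᵥ u))))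
      = fun u => ∏ i, Real.exp (-c * (u i) ^ 2) := funext fun u => gaussian_pi_rw c u
  rw [this]
  exact Integrable.fintype_prod (f := fun _ x => Real.exp (-c * x ^ 2))
    fun i => integrable_exp_neg_mul_sq hc

lemma gaussian_pi_integral {N : ℕ} {c : ℝ} (hc : 0 < c) :
    ∫ u : Fin N → ℝ, Real.exp (-(c * (u ⬝ᵥ u))) = Real.sqrt (π / c) ^ N := by
  simp_rw [gaussian_pi_rw c]
  rw [MeasureTheory.volume_pi, integral_fintype_prod_eq_pow (ι := Fin N) (fun x : ℝ => Real.exp (-c * x ^ 2)),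
    integral_gaussian, Fintype.card_fin]


lemma gaussian_quad {N : ℕ} {M : Matrix (Fin N) (Fin N) ℝ} (hM : M.PosDef)
    {c : ℝ} (hc : 0 < c) :
    Integrable (fun Y : Fin N → ℝ => Real.exp (-(c * (M.mulVec Y ⬝ᵥ Y)))) volume ∧
    ∫ Y : Fin N → ℝ, Real.exp (-(c * (M.mulVec Y ⬝ᵥ Y)))
      = Real.sqrt (π / c) ^ N / Real.sqrt M.det := by
  obtain ⟨S, hS⟩ : ∃ S : Matrix (Fin N) (Fin N) ℝ, M = Sᴴ * S := by
    classical
    open scoped MatrixOrder in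
    exact ⟨CFC.sqrt M, by
      rw [(CFC.sqrt_nonneg M).posSemidef.1.eq, CFC.sqrt_mul_sqrt_self M hM.posSemidef.nonneg]⟩
  rw [Matrix.conjTranspose_eq_transpose_of_trivial] at hS
  have hdet : M.det = S.det ^ 2 := by rw [hS, Matrix.det_mul, Matrix.det_transpose]; ring
  have hMdet := hM.det_pos
  have hdS : S.det ≠ 0 := by
    intro h
    rw [hdet, h] at hMdet
    simp at hMdet
  set g : (Fin N → ℝ) → ℝ := fun u => Real.exp (-(c * (u ⬝ᵥ u))) with hg
  have hfun : (fun Y : Fin N → ℝ => Real.exp (-(c * (M.mulVec Y ⬝ᵥ Y))))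
      = fun Y => g (Matrix.toLin' S Y) := by
    funext Y
    simp only [hg, Matrix.toLin'_apply, hS, aux_quad_eq]
  have hgi : Integrable g volume := gaussian_pi_integrable hc
  have hgc : Continuous g := by
    simp only [hg, dotProduct]
    fun_prop
  have hLc : Continuous (Matrix.toLin' S) := LinearMap.continuous_on_pi _
  have hmap : Measure.map (Matrix.toLin' S) volume
      = ENNReal.ofReal |S.det⁻¹| • volume :=
    Real.map_matrix_volume_pi_eq_smul_volume_pi hdS
  have hr0 : ENNReal.ofReal |S.det⁻¹| ≠ 0 := by
    simp only [ne_eq, ENNReal.ofReal_eq_zero, not_le]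
    positivity
  have hrt : ENNReal.ofReal |S.det⁻¹| ≠ ⊤ := ENNReal.ofReal_ne_top
  have hint : Integrable (fun Y => g (Matrix.toLin' S Y)) volume := by
    have : Integrable g (Measure.map (Matrix.toLin' S) volume) := by
      rw [hmap]
      exact (integrable_smul_measure hr0 hrt).mpr hgi
    exact (integrable_map_measure hgc.aestronglyMeasurable hLc.measurable.aemeasurable).mp this
  constructor
  · rw [hfun]; exact hint
  · rw [hfun]
    have h1 : ∫ Y, g (Matrix.toLin' S Y) = ∫ u, g u ∂(Measure.map (Matrix.toLin' S) volume) :=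
      (integral_map hLc.measurable.aemeasurable hgc.aestronglyMeasurable).symm
    rw [h1, hmap, integral_smul_measure, ENNReal.toReal_ofReal (abs_nonneg _),
      gaussian_pi_integral hc, hdet, Real.sqrt_sq_eq_abs, smul_eq_mul, abs_inv]
    ring

lemma aux_alg {A w T Kd : ℝ} (hA : A ≠ 0) (hw : w ≠ 0) (hT : T ≠ 0) (hKd : Kd ≠ 0) :
    A⁻¹ * w / (w * (T * Kd)) * (A * T / Kd⁻¹) = 1 := by
  field_simp

lemma omegaN_pos (N : ℕ) : 0 < omegaN N :=
  ENNReal.toReal_pos (Metric.measure_ball_pos volume _ one_pos).ne' measure_ball_lt_top.ne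

/-- Main kernel estimate: `|P_t f(X)| ≤ C_t^{1/p} ‖f‖_p` with everything explicit. -/
lemma hP_bound {N : ℕ} (Q B : Matrix (Fin N) (Fin N) ℝ)
    (hHor : ∀ t > 0, (hK Q B t).PosDef)
    (D γD : ℝ) (hD : 0 < D) (hγ : 0 < γD)
    (hvol : ∀ t > 0, γD * t ^ (D / 2) ≤ hV Q B t)
    (p : ℝ) (hp : 1 ≤ p)
    (f : (Fin N → ℝ) → ℝ) (hf : MemLp f (ENNReal.ofReal p) volume)
    (X : Fin N → ℝ) {t : ℝ} (ht : 0 < t) :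
    |hP Q B t f X| ≤ ((4 * π) ^ (-(N : ℝ) / 2) * omegaN N / γD) ^ (1 / p) *
      t ^ (-(D / (2 * p))) * (eLpNorm f (ENNReal.ofReal p) volume).toReal := by
  classical
  set K := hK Q B t with hKdef
  set M := K⁻¹ with hMdef
  have hKpd : K.PosDef := hHor t ht
  have hMpd : M.PosDef := hKpd.inv
  set w := (NormedSpace.exp (t • B)).mulVec X with hw
  set d : (Fin N → ℝ) → ℝ := fun Y => M.mulVec (Y - w) ⬝ᵥ (Y - w) with hd
  have hd0 : ∀ Y, 0 ≤ d Y := by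
    intro Y
    have h := hMpd.posSemidef.dotProduct_mulVec_nonneg (Y - w)
    simpa [hd, dotProduct_comm] using h
  set a0 : ℝ := (4 * π) ^ (-(N : ℝ) / 2) * omegaN N with ha0def
  have ha0 : 0 < a0 := mul_pos (Real.rpow_pos_of_pos (by positivity) _) (omegaN_pos N)
  have hVpos : 0 < hV Q B t := lt_of_lt_of_le (by positivity) (hvol t ht)
  set C : ℝ := a0 / hV Q B t with hCdef
  have hCpos : 0 < C := div_pos ha0 hVpos
  have kform : ∀ Y, hkernel Q B X Y t = C * Real.exp (-((4 * t)⁻¹ * d Y)) := by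
    intro Y
    unfold hkernel
    rw [hCdef, ha0def]
    congr 1
    congr 1
    rw [hm, Real.sq_sqrt (by simpa [hd, dotProduct_comm] using hMpd.posSemidef.dotProduct_mulVec_nonneg (Y - w))]
    show -(d Y) / (4 * t) = -((4 * t)⁻¹ * d Y)
    ring
  have hk0 : ∀ Y, 0 ≤ hkernel Q B X Y t := by
    intro Y; rw [kform Y]; positivity
  have hkC : ∀ Y, hkernel Q B X Y t ≤ C := by
    intro Y
    rw [kform Y]
    nth_rewrite 2 [show C = C * 1 by ring]
    refine mul_le_mul_of_nonneg_left ?_ hCpos.le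
    rw [Real.exp_le_one_iff]
    have := hd0 Y
    have h4t : (0:ℝ) < (4 * t)⁻¹ := by positivity
    nlinarith
  -- integrability and normalization
  have hctmp : (0:ℝ) < (4 * t)⁻¹ := by positivity
  obtain ⟨hGint, hGval⟩ := gaussian_quad hMpd hctmp
  have hInt : Integrable (fun Y => Real.exp (-((4 * t)⁻¹ * d Y))) volume := by
    have := hGint.comp_sub_right w
    simpa [hd] using this
  have hIntEq : ∫ Y, Real.exp (-((4 * t)⁻¹ * d Y))
      = Real.sqrt (π / (4 * t)⁻¹) ^ N / Real.sqrt M.det := by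
    rw [show (fun Y => Real.exp (-((4 * t)⁻¹ * d Y)))
        = fun Y => Real.exp (-((4 * t)⁻¹ * (M.mulVec (Y - w) ⬝ᵥ (Y - w)))) from rfl]
    rw [integral_sub_right_eq_self (fun u => Real.exp (-((4 * t)⁻¹ * (M.mulVec u ⬝ᵥ u)))) w]
    exact hGval
  have hKdetpos : 0 < K.det := hKpd.det_pos
  have hMdet : M.det = K.det⁻¹ := by
    rw [hMdef, Matrix.det_nonsing_inv, Ring.inverse_eq_inv]
  have hnorm : ∫ Y, hkernel Q B X Y t = 1 := by
    rw [show (fun Y => hkernel Q B X Y t) = fun Y => C * Real.exp (-((4 * t)⁻¹ * d Y)) from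
      funext kform]
    rw [integral_const_mul, hIntEq, hMdet, Real.sqrt_inv]
    rw [show π / (4 * t)⁻¹ = (4 * π) * t by field_simp]
    rw [Real.sqrt_mul (by positivity) t, mul_pow]
    have h4π : (4 * π) ^ (-(N : ℝ) / 2) = (Real.sqrt (4 * π) ^ N)⁻¹ := by
      rw [aux_sqrt_pow (by positivity), Real.sqrt_eq_rpow, ← Real.rpow_natCast (4 * π) N,
        ← Real.rpow_mul (by positivity), ← Real.rpow_neg (by positivity)]
      congr 1
      ring
    have hsq4π : 0 < Real.sqrt (4 * π) ^ N := by positivity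
    have hsqt : 0 < Real.sqrt t ^ N := by positivity
    have hsqK : 0 < Real.sqrt K.det := Real.sqrt_pos.mpr hKdetpos
    rw [hCdef, ha0def, hV, h4π]
    rw [show (t • K).det = t ^ N * K.det by
      rw [Matrix.det_smul]; simp [Fintype.card_fin]]
    rw [Real.sqrt_mul (by positivity) K.det, ← aux_sqrt_pow ht.le]
    exact aux_alg hsq4π.ne' (omegaN_pos N).ne' hsqt.ne' hsqK.ne'
  -- measurability and integrability of the kernel
  have kmeas : Measurable fun Y => hkernel Q B X Y t := by
    rw [show (fun Y => hkernel Q B X Y t) = fun Y => C * Real.exp (-((4 * t)⁻¹ * d Y)) from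
      funext kform]
    exact (continuous_const.mul (Real.continuous_exp.comp
      ((continuous_const.mul (aux_cont_quad M w)).neg))).measurable
  have hIntk : Integrable (fun Y => hkernel Q B X Y t) volume := by
    rw [show (fun Y => hkernel Q B X Y t) = fun Y => C * Real.exp (-((4 * t)⁻¹ * d Y)) from
      funext kform]
    exact hInt.const_mul C
  have Lk : ∫⁻ Y, ENNReal.ofReal (hkernel Q B X Y t) = 1 := by
    rw [← ofReal_integral_eq_lintegral_ofReal hIntk (Filter.Eventually.of_forall hk0), hnorm,
      ENNReal.ofReal_one]
  set Np := (eLpNorm f (ENNReal.ofReal p) volume).toReal with hNp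
  have hple : ENNReal.ofReal p ≠ 0 := by
    simp only [ne_eq, ENNReal.ofReal_eq_zero, not_le]; linarith
  have hpt : ENNReal.ofReal p ≠ ⊤ := ENNReal.ofReal_ne_top
  have heLp : eLpNorm f (ENNReal.ofReal p) volume ≠ ⊤ := hf.2.ne
  have step1 : |hP Q B t f X| ≤
      (∫⁻ Y, ENNReal.ofReal (hkernel Q B X Y t) * (‖f Y‖₊ : ℝ≥0∞)).toReal := by
    have h := norm_integral_le_lintegral_norm (μ := volume)
      (fun Y => hkernel Q B X Y t * f Y)
    rw [Real.norm_eq_abs] at h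
    have hc : ∀ Y, ENNReal.ofReal ‖hkernel Q B X Y t * f Y‖
        = ENNReal.ofReal (hkernel Q B X Y t) * (‖f Y‖₊ : ℝ≥0∞) := by
      intro Y
      rw [norm_mul, ENNReal.ofReal_mul (norm_nonneg _)]
      congr 1
      · rw [Real.norm_eq_abs, abs_of_nonneg (hk0 Y)]
      · exact ofReal_norm _
    calc |hP Q B t f X| ≤ _ := h
    _ = _ := by rw [lintegral_congr hc]
  have key : |hP Q B t f X| ≤ C ^ (1 / p) * Np := by
    rcases eq_or_lt_of_le hp with hp1 | hp1
    · -- p = 1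
      have hT : (∫⁻ Y, ENNReal.ofReal (hkernel Q B X Y t) * (‖f Y‖₊ : ℝ≥0∞))
          ≤ ENNReal.ofReal C * ∫⁻ Y, (‖f Y‖₊ : ℝ≥0∞) := by
        rw [← lintegral_const_mul' _ _ ENNReal.ofReal_ne_top]
        exact lintegral_mono fun Y => mul_le_mul_left
          (ENNReal.ofReal_le_ofReal (hkC Y)) _
      have heq : (∫⁻ Y, (‖f Y‖₊ : ℝ≥0∞)) = eLpNorm f (ENNReal.ofReal p) volume := by
        rw [← hp1, ENNReal.ofReal_one, eLpNorm_one_eq_lintegral_enorm]; rfl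
      calc |hP Q B t f X| ≤ _ := step1
      _ ≤ (ENNReal.ofReal C * eLpNorm f (ENNReal.ofReal p) volume).toReal := by
          refine ENNReal.toReal_mono ?_ (by rw [← heq]; exact hT)
          exact ENNReal.mul_ne_top ENNReal.ofReal_ne_top heLp
      _ = C * Np := by
          rw [ENNReal.toReal_mul, ENNReal.toReal_ofReal hCpos.le]
      _ = C ^ (1 / p) * Np := by rw [← hp1]; norm_num
    · -- 1 < p
      set q := Real.conjExponent p with hqdef
      have hpq : p.HolderConjugate q := Real.HolderConjugate.conjExponent hp1
      have hq1 : 1 < q := hpq.symm.lt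
      have hkmeasE : AEMeasurable (fun Y => ENNReal.ofReal (hkernel Q B X Y t)) volume :=
        (ENNReal.measurable_ofReal.comp kmeas).aemeasurable
      have hfmeasE : AEMeasurable (fun Y => (‖f Y‖₊ : ℝ≥0∞)) volume := hf.1.enorm
      have holder := ENNReal.lintegral_mul_le_Lp_mul_Lq volume hpq hfmeasE hkmeasE
      have hswap : (∫⁻ Y, ENNReal.ofReal (hkernel Q B X Y t) * (‖f Y‖₊ : ℝ≥0∞))
          = ∫⁻ Y, ((fun Y => (‖f Y‖₊ : ℝ≥0∞)) * fun Y => ENNReal.ofReal (hkernel Q B X Y t)) Y :=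
        lintegral_congr fun Y => by simp [mul_comm]
      -- bound the q-integral of the kernel
      have hkq : ∀ Y, ENNReal.ofReal (hkernel Q B X Y t) ^ q
          ≤ ENNReal.ofReal (C ^ (q - 1)) * ENNReal.ofReal (hkernel Q B X Y t) := by
        intro Y
        rw [ENNReal.ofReal_rpow_of_nonneg (hk0 Y) (by linarith),
          ← ENNReal.ofReal_mul (by positivity)]
        refine ENNReal.ofReal_le_ofReal ?_
        rw [kform Y]
        set e := Real.exp (-((4 * t)⁻¹ * d Y)) with hedef
        have he0 : 0 < e := Real.exp_pos _
        have he1 : e ≤ 1 := by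
          rw [hedef, Real.exp_le_one_iff]
          have := hd0 Y
          have h4t : (0:ℝ) < (4 * t)⁻¹ := by positivity
          nlinarith
        rw [Real.mul_rpow hCpos.le he0.le]
        have heq : e ^ q ≤ e := by
          have := Real.rpow_le_rpow_of_exponent_ge he0 he1 (le_of_lt hq1)
          rwa [Real.rpow_one] at this
        calc C ^ q * e ^ q ≤ C ^ q * e :=
          mul_le_mul_of_nonneg_left heq (Real.rpow_nonneg hCpos.le _)
        _ = C ^ (q - 1) * (C * e) := by
          rw [show q = q - 1 + 1 by ring, Real.rpow_add_one hCpos.ne' (q - 1)]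
          ring_nf
      have hkqint : (∫⁻ Y, ENNReal.ofReal (hkernel Q B X Y t) ^ q)
          ≤ ENNReal.ofReal (C ^ (q - 1)) := by
        calc (∫⁻ Y, ENNReal.ofReal (hkernel Q B X Y t) ^ q)
            ≤ ∫⁻ Y, ENNReal.ofReal (C ^ (q - 1)) * ENNReal.ofReal (hkernel Q B X Y t) :=
          lintegral_mono hkq
        _ = ENNReal.ofReal (C ^ (q - 1)) * ∫⁻ Y, ENNReal.ofReal (hkernel Q B X Y t) :=
          lintegral_const_mul' _ _ ENNReal.ofReal_ne_top
        _ = ENNReal.ofReal (C ^ (q - 1)) := by rw [Lk, mul_one]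
      have hexp : (q - 1) * (1 / q) = 1 / p := by
        have hmul := hpq.mul_eq_add
        have hq0 : q ≠ 0 := by linarith
        have hp0 : p ≠ 0 := by linarith
        field_simp
        nlinarith [hmul]
      have hkq2 : (∫⁻ Y, ENNReal.ofReal (hkernel Q B X Y t) ^ q) ^ (1 / q)
          ≤ ENNReal.ofReal (C ^ (1 / p)) := by
        calc (∫⁻ Y, ENNReal.ofReal (hkernel Q B X Y t) ^ q) ^ (1 / q)
            ≤ (ENNReal.ofReal (C ^ (q - 1))) ^ (1 / q) :=
          ENNReal.rpow_le_rpow hkqint (by positivity)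
        _ = ENNReal.ofReal (C ^ (1 / p)) := by
          rw [ENNReal.ofReal_rpow_of_nonneg (by positivity) (by positivity),
            ← Real.rpow_mul hCpos.le, hexp]
      have hfq : (∫⁻ Y, (‖f Y‖₊ : ℝ≥0∞) ^ p) ^ (1 / p)
          = eLpNorm f (ENNReal.ofReal p) volume := by
        rw [eLpNorm_eq_lintegral_rpow_enorm_toReal hple hpt, ENNReal.toReal_ofReal (by linarith)]; rfl
      calc |hP Q B t f X| ≤ _ := step1
      _ ≤ (eLpNorm f (ENNReal.ofReal p) volume * ENNReal.ofReal (C ^ (1 / p))).toReal := by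
          refine ENNReal.toReal_mono (ENNReal.mul_ne_top heLp ENNReal.ofReal_ne_top) ?_
          rw [hswap]
          refine le_trans holder ?_
          rw [hfq]
          exact mul_le_mul_right hkq2 _
      _ = C ^ (1 / p) * Np := by
          rw [ENNReal.toReal_mul, ENNReal.toReal_ofReal (by positivity), mul_comm]
  -- conclude
  have hCb : C ≤ a0 / γD * t ^ (-(D / 2)) := by
    have h1 : γD * t ^ (D / 2) ≤ hV Q B t := hvol t ht
    have h2 : (0:ℝ) < γD * t ^ (D / 2) := by positivity
    have h3 : a0 / hV Q B t ≤ a0 / (γD * t ^ (D / 2)) := by gcongr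
    calc C = a0 / hV Q B t := rfl
    _ ≤ a0 / (γD * t ^ (D / 2)) := h3
    _ = a0 / γD * t ^ (-(D / 2)) := by
        rw [Real.rpow_neg ht.le, ← div_div, div_eq_mul_inv]
  have hfinal : C ^ (1 / p) ≤ (a0 / γD) ^ (1 / p) * t ^ (-(D / (2 * p))) := by
    calc C ^ (1 / p) ≤ (a0 / γD * t ^ (-(D / 2))) ^ (1 / p) :=
      Real.rpow_le_rpow hCpos.le hCb (by positivity)
    _ = (a0 / γD) ^ (1 / p) * t ^ (-(D / (2 * p))) := by
      rw [Real.mul_rpow (by positivity) (Real.rpow_nonneg ht.le _),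
        ← Real.rpow_mul ht.le]
      congr 1
      ring
  calc |hP Q B t f X| ≤ C ^ (1 / p) * Np := key
  _ ≤ (a0 / γD) ^ (1 / p) * t ^ (-(D / (2 * p))) * Np :=
    mul_le_mul_of_nonneg_right hfinal ENNReal.toReal_nonneg

set_option maxHeartbeats 1000000 in
lemma time_integral {a c : ℝ} (ha : 0 < a) (hc : 1 < c) :
    IntegrableOn (fun t : ℝ => t ^ (-c) * Real.exp (-a / t)) (Ioi 0) volume ∧
    ∫ t in Ioi (0:ℝ), t ^ (-c) * Real.exp (-a / t)
      = a ^ (-(c - 1)) * Real.Gamma (c - 1) := by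
  have hq : (-1:ℝ) < c - 2 := by linarith
  have h1 : IntegrableOn (fun x : ℝ => Real.exp (-x) * x ^ (c - 2)) (Ioi 0) := by
    have := Real.GammaIntegral_convergent (s := c - 1) (by linarith)
    simpa [show c - 1 - 1 = c - 2 from by ring] using this
  have h2 : IntegrableOn (fun x : ℝ => Real.exp (-(a * x)) * (a * x) ^ (c - 2)) (Ioi 0) := by
    have := (integrableOn_Ioi_comp_mul_left_iff
      (fun x : ℝ => Real.exp (-x) * x ^ (c - 2)) 0 ha).mpr (by simpa using h1)
    simpa using this
  have h4 : IntegrableOn (fun x : ℝ => x ^ (c - 2) * Real.exp (-a * x)) (Ioi 0) := by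
    have h3 : IntegrableOn (fun x : ℝ => (a ^ (c - 2))⁻¹ *
        (Real.exp (-(a * x)) * (a * x) ^ (c - 2))) (Ioi 0) := h2.const_mul _
    refine IntegrableOn.congr_fun h3 (fun x hx => ?_) measurableSet_Ioi
    have hx0 : (0:ℝ) < x := hx
    rw [Real.mul_rpow ha.le hx0.le, neg_mul]
    have hane : a ^ (c - 2) ≠ 0 := (Real.rpow_pos_of_pos ha _).ne'
    field_simp
  have heqon : ∀ x ∈ Ioi (0:ℝ),
      (|(-1:ℝ)| * x ^ ((-1:ℝ) - 1)) •
        (fun t : ℝ => t ^ (-c) * Real.exp (-a / t)) (x ^ (-1:ℝ))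
      = x ^ (c - 2) * Real.exp (-a * x) := by
    intro x hx
    have hx0 : (0:ℝ) < x := hx
    simp only [smul_eq_mul]
    rw [Real.rpow_neg_one, Real.inv_rpow hx0.le, Real.rpow_neg hx0.le c, inv_inv, div_inv_eq_mul,
      abs_neg, abs_one, one_mul, ← mul_assoc, ← Real.rpow_add hx0]
    congr 2
    ring
  constructor
  · rw [← integrableOn_Ioi_comp_rpow_iff (fun t : ℝ => t ^ (-c) * Real.exp (-a / t))
      (p := -1) (by norm_num)]
    exact h4.congr_fun (fun x hx => (heqon x hx).symm) measurableSet_Ioi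
  · have hval := integral_comp_rpow_Ioi (fun t : ℝ => t ^ (-c) * Real.exp (-a / t))
      (p := -1) (by norm_num)
    rw [← hval, setIntegral_congr_fun measurableSet_Ioi heqon]
    have hint := integral_rpow_mul_exp_neg_mul_rpow one_pos hq ha
    simp_rw [Real.rpow_one] at hint
    rw [hint]
    rw [show -(c - 2 + 1) / 1 = -(c - 1) by ring, show (c - 2 + 1) / 1 = c - 1 by ring]
    ring

end AuxiliaryLemmas

set_option maxHeartbeats 1000000 in
/-- ultracontractivity of the Poisson semigroup. -/
theorem poisson_ultracontractive
    (N : ℕ) (hN : 2 ≤ N) (Q B : Matrix (Fin N) (Fin N) ℝ)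
    (hQ : Q.PosSemidef)
    (hHor : ∀ t > 0, (hK Q B t).PosDef)
    (D γD : ℝ) (hD : 0 < D) (hγ : 0 < γD)
    (hvol : ∀ t > 0, γD * t ^ (D / 2) ≤ hV Q B t)
    (p : ℝ) (hp : 1 ≤ p) :
    ∃ C₁ > (0:ℝ), ∀ f : (Fin N → ℝ) → ℝ, MemLp f (ENNReal.ofReal p) volume →
      ∀ X : Fin N → ℝ, ∀ z > (0:ℝ),
        |poisson Q B z f X| ≤
          C₁ * z ^ (-(D / p)) * (eLpNorm f (ENNReal.ofReal p) volume).toReal := by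
  classical
  have hp0 : (0:ℝ) < p := lt_of_lt_of_le one_pos hp
  set a0 : ℝ := (4 * π) ^ (-(N : ℝ) / 2) * omegaN N with ha0def
  have ha0 : 0 < a0 := mul_pos (Real.rpow_pos_of_pos (by positivity) _) (omegaN_pos N)
  set A : ℝ := (a0 / γD) ^ (1 / p) with hAdef
  have hApos : 0 < A := Real.rpow_pos_of_pos (div_pos ha0 hγ) _
  set c : ℝ := 3 / 2 + D / (2 * p) with hcdef
  have hc1 : 1 < c := by
    have h1 : 0 < D / (2 * p) := by positivity
    rw [hcdef]; linarith
  have hΓ : 0 < Real.Gamma (c - 1) := Real.Gamma_pos_of_pos (by linarith)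
  have h4π : (0:ℝ) < (4 * π) ^ (-(1:ℝ) / 2) := Real.rpow_pos_of_pos (by positivity) _
  refine ⟨(4 * π) ^ (-(1:ℝ) / 2) * A * (4:ℝ) ^ (c - 1) * Real.Gamma (c - 1),
    mul_pos (mul_pos (mul_pos h4π hApos) (Real.rpow_pos_of_pos (by norm_num) _)) hΓ,
    fun f hf X z hz => ?_⟩
  set Np := (eLpNorm f (ENNReal.ofReal p) volume).toReal with hNpdef
  have hNp0 : 0 ≤ Np := ENNReal.toReal_nonneg
  set a' : ℝ := z ^ 2 / 4 with ha'def
  have ha'pos : 0 < a' := by positivity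
  obtain ⟨hgint0, hgval0⟩ := time_integral ha'pos hc1
  set g : ℝ → ℝ := fun t => z * A * Np * (t ^ (-c) * Real.exp (-a' / t)) with hgdef
  have hgint : IntegrableOn g (Set.Ioi 0) volume := hgint0.const_mul _
  have hgval : ∫ t in Set.Ioi (0:ℝ), g t
      = z * A * Np * (a' ^ (-(c - 1)) * Real.Gamma (c - 1)) := by
    rw [hgdef, MeasureTheory.integral_const_mul, hgval0]
  have hg0 : ∀ t ∈ Set.Ioi (0:ℝ), 0 ≤ g t := by
    intro t ht
    have htpos : (0:ℝ) < t := ht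
    rw [hgdef]
    positivity
  have hdom : ∀ t ∈ Set.Ioi (0:ℝ),
      ENNReal.ofReal ‖z * t ^ (-(3:ℝ) / 2) * Real.exp (-(z ^ 2) / (4 * t)) * hP Q B t f X‖
        ≤ ENNReal.ofReal (g t) := by
    intro t ht
    have htpos : (0:ℝ) < t := ht
    apply ENNReal.ofReal_le_ofReal
    have hfac : (0:ℝ) ≤ z * t ^ (-(3:ℝ) / 2) * Real.exp (-(z ^ 2) / (4 * t)) := by positivity
    calc ‖z * t ^ (-(3:ℝ) / 2) * Real.exp (-(z ^ 2) / (4 * t)) * hP Q B t f X‖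
        = z * t ^ (-(3:ℝ) / 2) * Real.exp (-(z ^ 2) / (4 * t)) * |hP Q B t f X| := by
          rw [Real.norm_eq_abs, abs_mul, abs_of_nonneg hfac]
    _ ≤ z * t ^ (-(3:ℝ) / 2) * Real.exp (-(z ^ 2) / (4 * t)) *
          (A * t ^ (-(D / (2 * p))) * Np) := by
          refine mul_le_mul_of_nonneg_left ?_ hfac
          exact hP_bound Q B hHor D γD hD hγ hvol p hp f hf X htpos
    _ = g t := by
        show _ = z * A * Np * (t ^ (-c) * Real.exp (-a' / t))
        have h1 : t ^ (-(3:ℝ) / 2) * t ^ (-(D / (2 * p))) = t ^ (-c) := by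
          rw [← Real.rpow_add htpos]
          congr 1
          rw [hcdef]; ring
        have h2 : -(z ^ 2) / (4 * t) = -a' / t := by rw [ha'def]; ring
        rw [h2, ← h1]
        ring
  have key1 : |poisson Q B z f X| ≤ (4 * π) ^ (-(1:ℝ) / 2) *
      (∫⁻ t in Set.Ioi (0:ℝ), ENNReal.ofReal
        ‖z * t ^ (-(3:ℝ) / 2) * Real.exp (-(z ^ 2) / (4 * t)) * hP Q B t f X‖).toReal := by
    rw [poisson, abs_mul, abs_of_nonneg h4π.le]
    refine mul_le_mul_of_nonneg_left ?_ h4π.le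
    rw [← Real.norm_eq_abs]
    exact norm_integral_le_lintegral_norm _
  have key2 : (∫⁻ t in Set.Ioi (0:ℝ), ENNReal.ofReal
        ‖z * t ^ (-(3:ℝ) / 2) * Real.exp (-(z ^ 2) / (4 * t)) * hP Q B t f X‖)
      ≤ ENNReal.ofReal (∫ t in Set.Ioi (0:ℝ), g t) := by
    calc _ ≤ ∫⁻ t in Set.Ioi (0:ℝ), ENNReal.ofReal (g t) :=
      lintegral_mono_ae ((ae_restrict_iff' measurableSet_Ioi).mpr
        (Filter.Eventually.of_forall hdom))
    _ = ENNReal.ofReal (∫ t in Set.Ioi (0:ℝ), g t) :=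
      (ofReal_integral_eq_lintegral_ofReal hgint
        ((ae_restrict_iff' measurableSet_Ioi).mpr (Filter.Eventually.of_forall hg0))).symm
  have hgIval0 : 0 ≤ ∫ t in Set.Ioi (0:ℝ), g t := by
    rw [hgval]
    exact mul_nonneg (mul_nonneg (mul_nonneg hz.le hApos.le) hNp0)
      (mul_nonneg (Real.rpow_nonneg ha'pos.le _) hΓ.le)
  have key3 : |poisson Q B z f X| ≤ (4 * π) ^ (-(1:ℝ) / 2) *
      (z * A * Np * (a' ^ (-(c - 1)) * Real.Gamma (c - 1))) := by
    refine le_trans key1 ?_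
    rw [← hgval]
    refine mul_le_mul_of_nonneg_left ?_ h4π.le
    calc (∫⁻ t in Set.Ioi (0:ℝ), ENNReal.ofReal _).toReal
        ≤ (ENNReal.ofReal (∫ t in Set.Ioi (0:ℝ), g t)).toReal :=
      ENNReal.toReal_mono ENNReal.ofReal_ne_top key2
    _ = ∫ t in Set.Ioi (0:ℝ), g t := ENNReal.toReal_ofReal hgIval0
  have hzalg : z * a' ^ (-(c - 1)) = 4 ^ (c - 1) * z ^ (-(D / p)) := by
    rw [ha'def, Real.div_rpow (sq_nonneg z) (by norm_num), Real.rpow_neg (by norm_num : (0:ℝ) ≤ 4),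
      div_inv_eq_mul]
    have h2 : (z ^ 2 : ℝ) ^ (-(c - 1)) = z ^ (2 * -(c - 1)) := by
      rw [Real.rpow_mul hz.le, Real.rpow_two]
    rw [h2]
    have h3 : z * z ^ (2 * -(c - 1)) = z ^ (-(D / p)) := by
      rw [show z * z ^ (2 * -(c - 1)) = z ^ (1:ℝ) * z ^ (2 * -(c - 1)) by rw [Real.rpow_one],
        ← Real.rpow_add hz]
      congr 1
      rw [hcdef]
      field_simp
      ring
    rw [← h3]
    ring
  refine le_trans key3 (le_of_eq ?_)
  calc (4 * π) ^ (-(1:ℝ) / 2) * (z * A * Np * (a' ^ (-(c - 1)) * Real.Gamma (c - 1)))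
      = (4 * π) ^ (-(1:ℝ) / 2) * A * Real.Gamma (c - 1) * Np * (z * a' ^ (-(c - 1))) := by
        ring
  _ = (4 * π) ^ (-(1:ℝ) / 2) * A * Real.Gamma (c - 1) * Np *
        (4 ^ (c - 1) * z ^ (-(D / p))) := by rw [hzalg]
  _ = (4 * π) ^ (-(1:ℝ) / 2) * A * 4 ^ (c - 1) * Real.Gamma (c - 1) * z ^ (-(D / p)) * Np := by
        ring
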